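/- Define operators on functions: R_m f(τ) = Σ_{xz=m, 0≤y<z} f((xτ+y)/z), U_m f = same sum restricted to z odd, D_m f = same restricted to x odd, O_m f = same restricted to x,z even and y odd. Then for any m ≥ 1: O_{4m} = R_{4m} − R_m − U_{4m} − D_{4m}, and if m is odd then R_{2m} = U_{2m} + D_{2m}. -/

import Mathlib

noncomputable section

/-- `R_m f(τ) = Σ_{xz=m, 0≤y<z} f((xτ+y)/z)`. -/
def Rop (m : ℕ) (f : ℂ → ℂ) (τ : ℂ) : ℂ :=
  ∑ x ∈ m.divisorsAntidiagonal, ∑ y ∈ Finset.range x.2,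
    f (((x.1 : ℂ) * τ + (y : ℂ)) / (x.2 : ℂ))

/-- `U_m f(τ)`: the same sum restricted to `z` odd. -/
def Uop (m : ℕ) (f : ℂ → ℂ) (τ : ℂ) : ℂ :=
  ∑ x ∈ m.divisorsAntidiagonal.filter (fun x => Odd x.2), ∑ y ∈ Finset.range x.2,
    f (((x.1 : ℂ) * τ + (y : ℂ)) / (x.2 : ℂ))

/-- `D_m f(τ)`: the same sum restricted to `x` odd. -/
def Dop (m : ℕ) (f : ℂ → ℂ) (τ : ℂ) : ℂ :=
  ∑ x ∈ m.divisorsAntidiagonal.filter (fun x => Odd x.1), ∑ y ∈ Finset.range x.2,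
    f (((x.1 : ℂ) * τ + (y : ℂ)) / (x.2 : ℂ))

/-- `O_m f(τ)`: the same sum restricted to `x, z` even and `y` odd. -/
def Oop (m : ℕ) (f : ℂ → ℂ) (τ : ℂ) : ℂ :=
  ∑ x ∈ m.divisorsAntidiagonal.filter (fun x => Even x.1 ∧ Even x.2),
    ∑ y ∈ (Finset.range x.2).filter (fun y => Odd y),
      f (((x.1 : ℂ) * τ + (y : ℂ)) / (x.2 : ℂ))

private lemma even_terms_eq (m : ℕ) (f : ℂ → ℂ) (τ : ℂ) :
    ∑ x ∈ (4 * m).divisorsAntidiagonal.filter (fun x => Even x.1 ∧ Even x.2),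
      ∑ y ∈ (Finset.range x.2).filter (fun y => ¬ Odd y),
        f (((x.1 : ℂ) * τ + (y : ℂ)) / (x.2 : ℂ)) = Rop m f τ := by
  rw [Rop]
  refine Finset.sum_nbij' (fun p => (p.1 / 2, p.2 / 2)) (fun p => (2 * p.1, 2 * p.2))
    ?_ ?_ ?_ ?_ ?_
  · rintro ⟨a, c⟩ hp
    simp only [Finset.mem_filter, Nat.mem_divisorsAntidiagonal] at hp ⊢
    obtain ⟨⟨h1, h2⟩, ⟨a', rfl⟩, ⟨c', rfl⟩⟩ := hp
    have ha : (a' + a') / 2 = a' := by omega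
    have hc : (c' + c') / 2 = c' := by omega
    rw [ha, hc]
    have h4 : (a' + a') * (c' + c') = 4 * (a' * c') := by ring
    exact ⟨by omega, by omega⟩
  · rintro ⟨a, c⟩ hp
    simp only [Finset.mem_filter, Nat.mem_divisorsAntidiagonal] at hp ⊢
    have h4 : 2 * a * (2 * c) = 4 * (a * c) := by ring
    exact ⟨⟨by omega, by omega⟩, ⟨a, by ring⟩, ⟨c, by ring⟩⟩
  · rintro ⟨a, c⟩ hp
    simp only [Finset.mem_filter, Nat.mem_divisorsAntidiagonal] at hp
    obtain ⟨_, ⟨a', rfl⟩, ⟨c', rfl⟩⟩ := hp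
    simp only [Prod.mk.injEq]; omega
  · rintro ⟨a, c⟩ _
    simp only [Prod.mk.injEq]; omega
  · rintro ⟨a, c⟩ hp
    simp only [Finset.mem_filter, Nat.mem_divisorsAntidiagonal] at hp
    obtain ⟨⟨hac, hm0⟩, ⟨a', rfl⟩, ⟨c', rfl⟩⟩ := hp
    have ha : (a' + a') / 2 = a' := by omega
    have hc : (c' + c') / 2 = c' := by omega
    simp only [ha, hc]
    refine Finset.sum_nbij' (fun y => y / 2) (fun b => 2 * b) ?_ ?_ ?_ ?_ ?_
    · intro y hy
      simp only [Finset.mem_filter, Finset.mem_range, Nat.not_odd_iff_even] at hy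
      obtain ⟨hy1, b, rfl⟩ := hy
      simp only [Finset.mem_range]; omega
    · intro b hb
      simp only [Finset.mem_range] at hb
      simp only [Finset.mem_filter, Finset.mem_range, Nat.not_odd_iff_even]
      exact ⟨by omega, ⟨b, by omega⟩⟩
    · intro y hy
      simp only [Finset.mem_filter, Finset.mem_range, Nat.not_odd_iff_even] at hy
      obtain ⟨_, b, rfl⟩ := hy
      omega
    · intro b _
      omega
    · intro y hy
      simp only [Finset.mem_filter, Finset.mem_range, Nat.not_odd_iff_even] at hy
      obtain ⟨hy1, b, rfl⟩ := hy
      have hb : (b + b) / 2 = b := by omega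
      rw [hb]
      congr 1
      rw [show ((a' + a' : ℕ) : ℂ) * τ + ((b + b : ℕ) : ℂ) = 2 * ((a' : ℂ) * τ + (b : ℂ)) by
            push_cast; ring,
         show ((c' + c' : ℕ) : ℂ) = 2 * (c' : ℂ) by push_cast; ring,
         mul_div_mul_left _ _ (two_ne_zero)]

theorem Oop_eq (m : ℕ) (hm : 0 < m) (f : ℂ → ℂ) (τ : ℂ) :
    Oop (4 * m) f τ = Rop (4 * m) f τ - Rop m f τ - Uop (4 * m) f τ - Dop (4 * m) f τ
    ∧ (Odd m → Rop (2 * m) f τ = Uop (2 * m) f τ + Dop (2 * m) f τ) := by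
  constructor
  · have key : Rop (4 * m) f τ = Uop (4 * m) f τ + (Dop (4 * m) f τ +
        (Oop (4 * m) f τ + Rop m f τ)) := by
      rw [Rop, ← Finset.sum_filter_add_sum_filter_not _ (fun x : ℕ × ℕ => Odd x.2), Uop]
      congr 1
      rw [← Finset.sum_filter_add_sum_filter_not _ (fun x : ℕ × ℕ => Odd x.1), Dop]
      congr 1
      · apply Finset.sum_congr _ (fun _ _ => rfl)
        rw [Finset.filter_filter]
        apply Finset.filter_congr
        rintro ⟨x, z⟩ hx
        simp only [Nat.mem_divisorsAntidiagonal] at hx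
        simp only [Nat.not_odd_iff_even]
        constructor
        · exact fun h => h.2
        · intro hox
          refine ⟨?_, hox⟩
          rcases Nat.even_or_odd z with h | h
          · exact h
          · exfalso
            have ho : Odd (x * z) := hox.mul h
            rw [hx.1, Nat.odd_mul] at ho
            exact (by decide : ¬ Odd 4) ho.1
      · rw [← even_terms_eq m f τ, Oop, ← Finset.sum_add_distrib]
        have hset : ((4 * m).divisorsAntidiagonal.filter (fun x : ℕ × ℕ => ¬ Odd x.2)).filter
            (fun x : ℕ × ℕ => ¬ Odd x.1)
            = (4 * m).divisorsAntidiagonal.filter (fun x => Even x.1 ∧ Even x.2) := by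
          rw [Finset.filter_filter]
          apply Finset.filter_congr
          intro x _
          simp [Nat.not_odd_iff_even, and_comm]
        rw [hset]
        apply Finset.sum_congr rfl
        intro x _
        rw [← Finset.sum_filter_add_sum_filter_not (Finset.range x.2) (fun y => Odd y)]
    rw [key]; ring
  · intro hodd
    rw [Rop, ← Finset.sum_filter_add_sum_filter_not _ (fun x : ℕ × ℕ => Odd x.2), Uop, Dop]
    congr 1
    apply Finset.sum_congr _ (fun _ _ => rfl)
    apply Finset.filter_congr
    rintro ⟨x, z⟩ hx
    simp only [Nat.mem_divisorsAntidiagonal] at hx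
    have hxz := hx.1
    simp only [Nat.not_odd_iff_even]
    constructor
    · intro hz
      rcases Nat.even_or_odd x with h | h
      · exfalso
        obtain ⟨a, rfl⟩ := h
        obtain ⟨c, rfl⟩ := hz
        obtain ⟨k, hk⟩ := hodd
        have h4 : (a + a) * (c + c) = 4 * (a * c) := by ring
        omega
      · exact h
    · intro hx1
      rcases Nat.even_or_odd z with h | h
      · exact h
      · exfalso
        have ho : Odd (x * z) := hx1.mul h
        rw [hxz, Nat.odd_mul] at ho
        exact (by decide : ¬ Odd 2) ho.1
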